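/- For positive definite n×n matrices A and B, d_l(A♯B, (A+B)/2) ≤ (1/2) d_l(A,B), where A♯B is the geometric mean and d_l the Log-Determinant metric. -/

import Mathlib

open Matrix ComplexOrder

/-- Matrix power via functional calculus (spectral decomposition), for Hermitian matrices. -/
noncomputable def mpow {n : Type*} [Fintype n] [DecidableEq n]
    (A : Matrix n n ℂ) (p : ℝ) : Matrix n n ℂ :=
  if hA : A.IsHermitian then
    (hA.eigenvectorUnitary : Matrix n n ℂ) *
      Matrix.diagonal (fun i => ((hA.eigenvalues i ^ p : ℝ) : ℂ)) *
      star (hA.eigenvectorUnitary : Matrix n n ℂ)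
  else 0

/-- Hellinger distance. -/
noncomputable def dh {n : Type*} [Fintype n] [DecidableEq n]
    (A B : Matrix n n ℂ) : ℝ :=
  Real.sqrt ((Matrix.trace (A + B)).re
    - 2 * (Matrix.trace (mpow A (1/2) * mpow B (1/2))).re)

/-- Bures–Wasserstein distance. -/
noncomputable def db {n : Type*} [Fintype n] [DecidableEq n]
    (A B : Matrix n n ℂ) : ℝ :=
  Real.sqrt ((Matrix.trace (A + B)).re
    - 2 * (Matrix.trace (mpow (mpow A (1/2) * B * mpow A (1/2)) (1/2))).re)

/-- Log-determinant distance. -/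
noncomputable def dl {n : Type*} [Fintype n] [DecidableEq n]
    (A B : Matrix n n ℂ) : ℝ :=
  Real.log (((A + B) / 2).det).re
    - (1/2) * (Real.log (A.det.re) + Real.log (B.det.re))

/-- Matrix power mean μ_p(t;A,B) = (t A^p + (1-t) B^p)^{1/p}. -/
noncomputable def mpm {n : Type*} [Fintype n] [DecidableEq n]
    (p t : ℝ) (A B : Matrix n n ℂ) : Matrix n n ℂ :=
  mpow ((t : ℂ) • mpow A p + ((1 - t : ℝ) : ℂ) • mpow B p) (1/p)

/-- Weighted geometric mean A ♯_t B. -/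
noncomputable def sharp {n : Type*} [Fintype n] [DecidableEq n]
    (t : ℝ) (A B : Matrix n n ℂ) : Matrix n n ℂ :=
  mpow A (1/2) * mpow (mpow A (-(1/2)) * B * mpow A (-(1/2))) t * mpow A (1/2)

/-- Quantum fidelity. -/
noncomputable def fid {n : Type*} [Fintype n] [DecidableEq n]
    (A B : Matrix n n ℂ) : ℝ :=
  ((Matrix.trace (mpow (mpow A (1/2) * B * mpow A (1/2)) (1/2))).re) ^ 2

namespace Aux16
variable {n : Type*} [Fintype n] [DecidableEq n]

lemma star_mul_self_eigen {A : Matrix n n ℂ} (hA : A.IsHermitian) :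
    star (hA.eigenvectorUnitary : Matrix n n ℂ) * (hA.eigenvectorUnitary : Matrix n n ℂ) = 1 :=
  (Matrix.mem_unitaryGroup_iff').mp hA.eigenvectorUnitary.2

lemma self_mul_star_eigen {A : Matrix n n ℂ} (hA : A.IsHermitian) :
    (hA.eigenvectorUnitary : Matrix n n ℂ) * star (hA.eigenvectorUnitary : Matrix n n ℂ) = 1 :=
  (Matrix.mem_unitaryGroup_iff).mp hA.eigenvectorUnitary.2

lemma mpow_eq {A : Matrix n n ℂ} (hA : A.IsHermitian) (p : ℝ) :
    mpow A p = (hA.eigenvectorUnitary : Matrix n n ℂ) *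
      Matrix.diagonal (fun i => ((hA.eigenvalues i ^ p : ℝ) : ℂ)) *
      star (hA.eigenvectorUnitary : Matrix n n ℂ) := dif_pos hA

/-- conjugation of diagonals multiply -/
lemma conj_mul_conj {A : Matrix n n ℂ} (hA : A.IsHermitian) (f g : n → ℝ) :
    ((hA.eigenvectorUnitary : Matrix n n ℂ) * Matrix.diagonal (fun i => (f i : ℂ)) *
        star (hA.eigenvectorUnitary : Matrix n n ℂ)) *
      ((hA.eigenvectorUnitary : Matrix n n ℂ) * Matrix.diagonal (fun i => (g i : ℂ)) *
        star (hA.eigenvectorUnitary : Matrix n n ℂ)) =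
    (hA.eigenvectorUnitary : Matrix n n ℂ) * Matrix.diagonal (fun i => ((f i * g i : ℝ) : ℂ)) *
        star (hA.eigenvectorUnitary : Matrix n n ℂ) := by
  set U := (hA.eigenvectorUnitary : Matrix n n ℂ)
  calc U * Matrix.diagonal (fun i => (f i : ℂ)) * star U *
        (U * Matrix.diagonal (fun i => (g i : ℂ)) * star U)
      = U * (Matrix.diagonal (fun i => (f i : ℂ)) * ((star U * U) *
          Matrix.diagonal (fun i => (g i : ℂ)))) * star U := by
        simp only [Matrix.mul_assoc]
    _ = U * Matrix.diagonal (fun i => ((f i * g i : ℝ) : ℂ)) * star U := by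
        rw [star_mul_self_eigen hA, one_mul, Matrix.diagonal_mul_diagonal]
        push_cast
        rfl

lemma mpow_mul_mpow {A : Matrix n n ℂ} (hA : A.PosDef) (p q : ℝ) :
    mpow A p * mpow A q = mpow A (p + q) := by
  rw [mpow_eq hA.1, mpow_eq hA.1, mpow_eq hA.1, conj_mul_conj hA.1]
  have hfun : (fun i => ((hA.1.eigenvalues i ^ p * hA.1.eigenvalues i ^ q : ℝ) : ℂ)) =
      fun i => ((hA.1.eigenvalues i ^ (p + q) : ℝ) : ℂ) :=
    funext fun i => by rw [← Real.rpow_add (hA.eigenvalues_pos i)]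
  rw [hfun]

lemma mpow_one {A : Matrix n n ℂ} (hA : A.IsHermitian) : mpow A 1 = A := by
  rw [mpow_eq hA]
  simp only [Real.rpow_one]
  exact hA.spectral_theorem.symm

lemma mpow_isHermitian {A : Matrix n n ℂ} (hA : A.IsHermitian) (p : ℝ) :
    (mpow A p).IsHermitian := by
  rw [mpow_eq hA, Matrix.star_eq_conjTranspose]
  exact Matrix.isHermitian_mul_mul_conjTranspose _
    (Matrix.isHermitian_diagonal_of_self_adjoint _ (by ext i; simp))

lemma isUnit_det_eigen {A : Matrix n n ℂ} (hA : A.IsHermitian) :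
    IsUnit (hA.eigenvectorUnitary : Matrix n n ℂ).det := by
  apply IsUnit.of_mul_eq_one (star (hA.eigenvectorUnitary : Matrix n n ℂ)).det
  rw [← Matrix.det_mul, self_mul_star_eigen hA, Matrix.det_one]

lemma posDef_conj {M C : Matrix n n ℂ} (hM : M.PosDef) (hC : IsUnit C.det) :
    (C * M * Cᴴ).PosDef := by
  refine Matrix.PosDef.of_dotProduct_mulVec_pos (Matrix.isHermitian_mul_mul_conjTranspose _ hM.1) fun x hx => ?_
  have hCH : IsUnit (Cᴴ).det := by
    rw [Matrix.det_conjTranspose]; exact hC.star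
  have hxC : Cᴴ *ᵥ x ≠ 0 := by
    intro h
    apply hx
    have h0 : (Cᴴ)⁻¹ *ᵥ (Cᴴ *ᵥ x) = (Cᴴ)⁻¹ *ᵥ 0 := by rw [h]
    rwa [Matrix.mulVec_mulVec, Matrix.nonsing_inv_mul _ hCH, Matrix.one_mulVec,
      Matrix.mulVec_zero] at h0
  have key : star x ⬝ᵥ ((C * M * Cᴴ) *ᵥ x) = star (Cᴴ *ᵥ x) ⬝ᵥ (M *ᵥ (Cᴴ *ᵥ x)) := by
    rw [star_mulVec, Matrix.conjTranspose_conjTranspose, ← Matrix.mulVec_mulVec,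
      ← Matrix.mulVec_mulVec, Matrix.dotProduct_mulVec (star x)]
  rw [key]
  exact hM.dotProduct_mulVec_pos hxC

lemma mpow_posDef {A : Matrix n n ℂ} (hA : A.PosDef) (p : ℝ) : (mpow A p).PosDef := by
  rw [mpow_eq hA.1]
  have hd : (Matrix.diagonal (fun i => ((hA.1.eigenvalues i ^ p : ℝ) : ℂ))).PosDef := by
    apply Matrix.PosDef.diagonal
    intro i
    exact_mod_cast Complex.zero_lt_real.mpr (Real.rpow_pos_of_pos (hA.eigenvalues_pos i) p)
  rw [Matrix.star_eq_conjTranspose]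
  exact posDef_conj hd (isUnit_det_eigen hA.1)

lemma det_real {A : Matrix n n ℂ} (hA : A.IsHermitian) : A.det = ((A.det.re : ℝ) : ℂ) := by
  rw [hA.det_eq_prod_eigenvalues]
  norm_cast

lemma det_mpow {A : Matrix n n ℂ} (hA : A.PosDef) (p : ℝ) :
    (mpow A p).det = (((A.det.re) ^ p : ℝ) : ℂ) := by
  rw [mpow_eq hA.1, Matrix.det_mul_right_comm, Matrix.det_mul, self_mul_star_eigen hA.1,
    Matrix.det_one, one_mul, Matrix.det_diagonal]
  have hre : A.det.re = ∏ i, hA.1.eigenvalues i := by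
    rw [hA.1.det_eq_prod_eigenvalues]
    norm_cast
  rw [hre, ← Real.finset_prod_rpow _ _ (fun i _ => (hA.eigenvalues_pos i).le)]
  norm_cast


lemma mpow_zero {A : Matrix n n ℂ} (hA : A.IsHermitian) : mpow A 0 = 1 := by
  rw [mpow_eq hA]
  simp only [Real.rpow_zero, Complex.ofReal_one, Matrix.diagonal_one, Matrix.mul_one]
  exact self_mul_star_eigen hA

lemma posSemidef_real_smul {M : Matrix n n ℂ} (hM : M.PosSemidef) {c : ℝ} (hc : 0 ≤ c) :
    ((c : ℂ) • M).PosSemidef := by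
  refine Matrix.PosSemidef.of_dotProduct_mulVec_nonneg ?_ ?_
  · rw [Matrix.IsHermitian, Matrix.conjTranspose_smul, hM.1.eq]
    congr 1
    simp
  · intro x
    rw [Matrix.smul_mulVec, dotProduct_smul]
    have h := hM.dotProduct_mulVec_nonneg x
    rw [Complex.le_def] at h ⊢
    simp only [smul_eq_mul, Complex.mul_re, Complex.mul_im, Complex.ofReal_re, Complex.ofReal_im,
      Complex.zero_re, Complex.zero_im] at *
    constructor
    · nlinarith [h.1]
    · rw [← h.2]; ring

lemma posDef_real_smul {M : Matrix n n ℂ} (hM : M.PosDef) {c : ℝ} (hc : 0 < c) :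
    ((c : ℂ) • M).PosDef := by
  refine Matrix.PosDef.of_dotProduct_mulVec_pos ?_ ?_
  · rw [Matrix.IsHermitian, Matrix.conjTranspose_smul, hM.1.eq]
    congr 1
    simp
  · intro x hx
    rw [Matrix.smul_mulVec, dotProduct_smul]
    have h := hM.dotProduct_mulVec_pos hx
    rw [Complex.lt_def] at h ⊢
    simp only [smul_eq_mul, Complex.mul_re, Complex.mul_im, Complex.ofReal_re, Complex.ofReal_im,
      Complex.zero_re, Complex.zero_im] at *
    constructor
    · nlinarith [h.1]
    · rw [← h.2]; ring

lemma one_add_psd_det {P : Matrix n n ℂ} (hP : P.PosSemidef) :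
    ∃ r : ℝ, (1 + P).det = (r : ℂ) ∧ 1 ≤ r := by
  set W := (hP.1.eigenvectorUnitary : Matrix n n ℂ) with hW
  set D := Matrix.diagonal ((RCLike.ofReal ∘ hP.1.eigenvalues : n → ℂ)) with hD
  have expand : W * (1 + D) * star W = 1 + W * D * star W := by
    rw [Matrix.mul_add, Matrix.mul_one, Matrix.add_mul, self_mul_star_eigen hP.1]
  have h1 : (1 : Matrix n n ℂ) + P = W * (1 + D) * star W := by
    rw [expand]
    congr 1
    exact hP.1.spectral_theorem
  refine ⟨∏ i, (1 + hP.1.eigenvalues i), ?_, ?_⟩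
  · rw [h1, Matrix.det_mul_right_comm, Matrix.det_mul, self_mul_star_eigen hP.1,
      Matrix.det_one, one_mul]
    have : (1 : Matrix n n ℂ) + D = Matrix.diagonal (fun i => ((1 + hP.1.eigenvalues i : ℝ) : ℂ)) := by
      rw [hD, ← Matrix.diagonal_one, Matrix.diagonal_add]
      congr 1
      funext i
      simp
    rw [this, Matrix.det_diagonal]
    norm_cast
  · calc (1:ℝ) = ∏ _i : n, (1:ℝ) := by simp
      _ ≤ ∏ i, (1 + hP.1.eigenvalues i) :=
        Finset.prod_le_prod (fun i _ => zero_le_one)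
          (fun i _ => by linarith [hP.eigenvalues_nonneg i])

lemma det_mono {X Y : Matrix n n ℂ} (hX : X.PosDef) (h : (Y - X).PosSemidef) :
    X.det.re ≤ Y.det.re := by
  set S := mpow X (1/2) with hSdef
  set T := mpow X (-(1/2)) with hTdef
  have hST : S * T = 1 := by
    have e : (1/2 : ℝ) + -(1/2) = 0 := by norm_num
    rw [hSdef, hTdef, mpow_mul_mpow hX, e, mpow_zero hX.1]
  have hTS : T * S = 1 := by
    have e : (-(1/2) : ℝ) + 1/2 = 0 := by norm_num
    rw [hSdef, hTdef, mpow_mul_mpow hX, e, mpow_zero hX.1]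
  have hSS : S * S = X := by
    have e : (1/2 : ℝ) + 1/2 = 1 := by norm_num
    rw [hSdef, mpow_mul_mpow hX, e, mpow_one hX.1]
  have hT_herm : T.IsHermitian := mpow_isHermitian hX.1 _
  set P := T * (Y - X) * T with hPdef
  have hP : P.PosSemidef := by
    have := h.mul_mul_conjTranspose_same T
    rwa [hT_herm.eq] at this
  have hY : Y = S * (1 + P) * S := by
    rw [Matrix.mul_add, Matrix.mul_one, Matrix.add_mul, hSS]
    have key : S * P * S = Y - X := by
      calc S * (T * (Y - X) * T) * S
          = (S * T) * (Y - X) * (T * S) := by simp only [Matrix.mul_assoc]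
        _ = Y - X := by rw [hST, hTS, one_mul, mul_one]
    rw [key]
    abel
  obtain ⟨r, hr, hr1⟩ := one_add_psd_det hP
  have hSdet : S.det * S.det = X.det := by rw [← Matrix.det_mul, hSS]
  have hdet : Y.det = X.det * (r : ℂ) := by
    rw [hY, Matrix.det_mul, Matrix.det_mul, hr, ← hSdet]
    ring
  have hx : X.det = ((X.det.re : ℝ) : ℂ) := det_real hX.1
  have hYre : Y.det.re = X.det.re * r := by
    rw [hdet, hx, ← Complex.ofReal_mul, Complex.ofReal_re]
    simp
  have hxpos : 0 < X.det.re := by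
    have := hX.det_pos
    rw [Complex.lt_def] at this
    simpa using this.1
  rw [hYre]
  nlinarith

lemma amgm_psd {C : Matrix n n ℂ} (hC : C.PosDef) :
    ((2:ℂ)⁻¹ • (1 + C) - mpow C (1/2)).PosSemidef := by
  set V := (hC.1.eigenvectorUnitary : Matrix n n ℂ) with hV
  set D := Matrix.diagonal ((RCLike.ofReal ∘ hC.1.eigenvalues : n → ℂ)) with hD
  have h1 : (1 : Matrix n n ℂ) + C = V * (1 + D) * star V := by
    rw [Matrix.mul_add, Matrix.mul_one, Matrix.add_mul, self_mul_star_eigen hC.1]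
    congr 1
    exact hC.1.spectral_theorem
  have key : (2:ℂ)⁻¹ • (1 + C) - mpow C (1/2) =
      V * ((2:ℂ)⁻¹ • (1 + D) - Matrix.diagonal (fun i => ((hC.1.eigenvalues i ^ ((1:ℝ)/2) : ℝ) : ℂ)))
        * star V := by
    rw [Matrix.mul_sub, Matrix.sub_mul, Matrix.mul_smul, Matrix.smul_mul, ← h1, mpow_eq hC.1]
  rw [key]
  have hdiag : ((2:ℂ)⁻¹ • (1 + D) -
      Matrix.diagonal (fun i => ((hC.1.eigenvalues i ^ ((1:ℝ)/2) : ℝ) : ℂ))) =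
      Matrix.diagonal (fun i =>
        (((2⁻¹ * (1 + hC.1.eigenvalues i) - hC.1.eigenvalues i ^ ((1:ℝ)/2)) : ℝ) : ℂ)) := by
    rw [hD, ← Matrix.diagonal_one, Matrix.diagonal_add, ← Matrix.diagonal_smul,
      Matrix.diagonal_sub]
    refine congrArg Matrix.diagonal ?_
    funext i
    simp only [Pi.sub_apply, Pi.smul_apply, Function.comp_apply, smul_eq_mul,
      RCLike.ofReal_alg, Algebra.smul_def, Complex.coe_algebraMap, mul_one]
    push_cast
    ring
  rw [hdiag]
  refine Matrix.PosSemidef.mul_mul_conjTranspose_same (Matrix.PosSemidef.diagonal fun i => ?_) V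
  simp only [Pi.zero_apply]
  rw [Complex.zero_le_real]
  have hμ := hC.eigenvalues_pos i
  have hsq : Real.sqrt (hC.1.eigenvalues i) ^ 2 = hC.1.eigenvalues i :=
    Real.sq_sqrt hμ.le
  rw [← Real.sqrt_eq_rpow]
  nlinarith [Real.sqrt_nonneg (hC.1.eigenvalues i),
    sq_nonneg (Real.sqrt (hC.1.eigenvalues i) - 1)]

lemma div_two_eq (A : Matrix n n ℂ) : A / 2 = (2:ℂ)⁻¹ • A := by
  have h2 : (2 : Matrix n n ℂ) = (2:ℂ) • (1 : Matrix n n ℂ) := by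
    rw [← Matrix.diagonal_ofNat (n := n) (α := ℂ) 2, smul_eq_diagonal_mul, mul_one]
  have : Invertible (2:ℂ) := invertibleOfNonzero two_ne_zero
  rw [div_eq_mul_inv, h2, Matrix.inv_smul (2:ℂ) (A := (1 : Matrix n n ℂ)) (by simp),
    inv_one, invOf_eq_inv, mul_smul_comm, mul_one]

lemma det_re_pos {X : Matrix n n ℂ} (hX : X.PosDef) : 0 < X.det.re := by
  have := hX.det_pos
  rw [Complex.lt_def] at this
  simpa using this.1


end Aux16

open Aux16 in
theorem stmt16 {n : Type*} [Fintype n] [DecidableEq n]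
    {A B : Matrix n n ℂ} (hA : A.PosDef) (hB : B.PosDef) :
    dl (sharp (1/2) A B) ((A + B) / 2) ≤ (1/2) * dl A B := by
  set S := mpow A (1/2) with hSdef
  set T := mpow A (-(1/2)) with hTdef
  have hS_herm : S.IsHermitian := mpow_isHermitian hA.1 _
  have hT_herm : T.IsHermitian := mpow_isHermitian hA.1 _
  have hST : S * T = 1 := by
    have e : (1/2 : ℝ) + -(1/2) = 0 := by norm_num
    rw [hSdef, hTdef, mpow_mul_mpow hA, e, mpow_zero hA.1]
  have hTS : T * S = 1 := by
    have e : (-(1/2) : ℝ) + 1/2 = 0 := by norm_num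
    rw [hSdef, hTdef, mpow_mul_mpow hA, e, mpow_zero hA.1]
  have hSS : S * S = A := by
    have e : (1/2 : ℝ) + 1/2 = 1 := by norm_num
    rw [hSdef, mpow_mul_mpow hA, e, mpow_one hA.1]
  set C := T * B * T with hCdef
  have hSpd : S.PosDef := mpow_posDef hA _
  have hTpd : T.PosDef := mpow_posDef hA _
  have hC : C.PosDef := by
    have hTdet : IsUnit T.det := isUnit_iff_ne_zero.mpr hTpd.det_pos.ne'
    have := posDef_conj hB hTdet
    rwa [hT_herm.eq] at this
  set R := mpow C (1/2) with hRdef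
  have hR : R.PosDef := mpow_posDef hC _
  have hG_eq : sharp (1/2) A B = S * R * S := by
    rw [sharp, hRdef, hCdef, hSdef, hTdef]
  set G := S * R * S with hGdef
  have hG : G.PosDef := by
    have hSdet : IsUnit S.det := isUnit_iff_ne_zero.mpr hSpd.det_pos.ne'
    have := posDef_conj hR hSdet
    rwa [hS_herm.eq] at this
  have hSCS : S * C * S = B := by
    calc S * (T * B * T) * S = (S * T) * B * (T * S) := by simp only [Matrix.mul_assoc]
      _ = B := by rw [hST, hTS, one_mul, mul_one]
  have hM_eq : S * (1 + C) * S = A + B := by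
    rw [Matrix.mul_add, Matrix.mul_one, Matrix.add_mul, hSS, hSCS]
  set M := (2:ℂ)⁻¹ • (A + B) with hMdef
  have hMpd : M.PosDef := by
    have h2 : ((((2:ℝ)⁻¹ : ℝ) : ℂ)) = (2:ℂ)⁻¹ := by norm_num
    rw [hMdef, ← h2]
    exact posDef_real_smul (hA.add hB) (by norm_num)
  set N := (2:ℂ)⁻¹ • (G + M) with hNdef
  have hNpd : N.PosDef := by
    have h2 : ((((2:ℝ)⁻¹ : ℝ) : ℂ)) = (2:ℂ)⁻¹ := by norm_num
    rw [hNdef, ← h2]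
    exact posDef_real_smul (hG.add hMpd) (by norm_num)
  -- M - G is PSD
  have hMG : (M - G).PosSemidef := by
    have hkey : S * ((2:ℂ)⁻¹ • (1 + C) - R) * S = M - G := by
      rw [Matrix.mul_sub, Matrix.sub_mul, Matrix.mul_smul, Matrix.smul_mul, hM_eq]
    have := (amgm_psd hC).mul_mul_conjTranspose_same S
    rw [hS_herm.eq] at this
    -- this : (S * ((2:ℂ)⁻¹ • (1 + C) - mpow C (1/2)) * S).PosSemidef
    rwa [hkey] at this
  have hMN : (M - N).PosSemidef := by
    have hkey : M - N = (((2:ℝ)⁻¹ : ℝ) : ℂ) • (M - G) := by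
      have h2 : ((((2:ℝ)⁻¹ : ℝ) : ℂ)) = (2:ℂ)⁻¹ := by norm_num
      rw [h2, hNdef, smul_sub, smul_add]
      have hhalf : M = (2:ℂ)⁻¹ • M + (2:ℂ)⁻¹ • M := by
        rw [← add_smul]
        norm_num
      nth_rewrite 1 [hhalf]
      abel
    rw [hkey]
    exact posSemidef_real_smul hMG (by norm_num)
  -- determinant identities
  set a := A.det.re with hadef
  set b := B.det.re with hbdef
  have ha : 0 < a := det_re_pos hA
  have hb : 0 < b := det_re_pos hB
  have hSdet : S.det = ((a ^ ((1:ℝ)/2) : ℝ) : ℂ) := det_mpow hA _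
  have hTdet : T.det = ((a ^ (-((1:ℝ)/2)) : ℝ) : ℂ) := det_mpow hA _
  have hBdet : B.det = ((b : ℝ) : ℂ) := det_real hB.1
  have hCdet : C.det = ((a ^ (-((1:ℝ)/2)) * b * a ^ (-((1:ℝ)/2)) : ℝ) : ℂ) := by
    rw [hCdef, Matrix.det_mul, Matrix.det_mul, hTdet, hBdet]
    push_cast
    ring
  set c := a ^ (-((1:ℝ)/2)) * b * a ^ (-((1:ℝ)/2)) with hcdef
  have hcpos : 0 < c := by positivity
  have hCre : C.det.re = c := by rw [hCdet, Complex.ofReal_re]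
  have hRdet : R.det = ((c ^ ((1:ℝ)/2) : ℝ) : ℂ) := by
    rw [hRdef, det_mpow hC, hCre]
  have hGdet : G.det = ((a ^ ((1:ℝ)/2) * c ^ ((1:ℝ)/2) * a ^ ((1:ℝ)/2) : ℝ) : ℂ) := by
    rw [hGdef, Matrix.det_mul, Matrix.det_mul, hSdet, hRdet]
    push_cast
    ring
  have hGre : G.det.re = a ^ ((1:ℝ)/2) * c ^ ((1:ℝ)/2) * a ^ ((1:ℝ)/2) := by
    rw [hGdet, Complex.ofReal_re]
  have hlogc : Real.log c = -((1:ℝ)/2) * Real.log a + Real.log b + -((1:ℝ)/2) * Real.log a := by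
    rw [hcdef, Real.log_mul (by positivity) (by positivity),
      Real.log_mul (by positivity) hb.ne', Real.log_rpow ha]
  have hGlog : Real.log G.det.re = (1/2) * (Real.log a + Real.log b) := by
    rw [hGre, Real.log_mul (by positivity) (by positivity),
      Real.log_mul (by positivity) (by positivity), Real.log_rpow ha, Real.log_rpow hcpos]
    rw [hlogc]
    ring
  -- det monotonicity
  have hdetNM : N.det.re ≤ M.det.re := det_mono hNpd hMN
  have hlogNM : Real.log N.det.re ≤ Real.log M.det.re :=
    Real.log_le_log (det_re_pos hNpd) hdetNM
  -- unfold dl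
  have e1 : (sharp (1/2) A B + (A + B) / 2) / 2 = N := by
    rw [div_two_eq, div_two_eq, hG_eq]
  have e2 : (A + B) / 2 = M := div_two_eq _
  rw [dl, dl, e1, e2]
  rw [hG_eq]
  -- goal in terms of logs
  have hGdetre : (S * R * S).det.re = G.det.re := rfl
  rw [hGdetre, hGlog]
  linarith
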